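/- Let (X, 𝔉, π) be a probability space, let F : X → [1, ∞) be measurable, and let ε ∈ (0,1) be such that ∫ F^{1−ε} dπ = ∞. Then there exists a sequence (w_n)_{n≥0} increasing to infinity such that π(F > w_n) ≥ w_n^{ε/2 − 1} for every n. -/

import Mathlib

open MeasureTheory Filter

theorem stmt_12 {X : Type*} [MeasurableSpace X]
    (π : Measure X) [IsProbabilityMeasure π]
    (F : X → ℝ) (hFmeas : Measurable F) (hF1 : ∀ x, 1 ≤ F x)
    (ε : ℝ) (hε : ε ∈ Set.Ioo (0 : ℝ) 1)
    (hinf : ∫⁻ x, ENNReal.ofReal (F x ^ (1 - ε)) ∂π = ⊤) :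
    ∃ w : ℕ → ℝ, StrictMono w ∧ Tendsto w atTop atTop ∧
      ∀ n, 1 ≤ w n ∧
        ENNReal.ofReal ((w n) ^ (ε / 2 - 1)) ≤ π {x | w n < F x} := by
  obtain ⟨hε0, hε1⟩ := hε
  set p : ℝ := 1 - ε with hp
  have hp0 : 0 < p := by simp [hp]; linarith
  -- Key claim: arbitrarily large good w exist
  have key : ∀ M : ℝ, ∃ v : ℝ, M < v ∧ 1 ≤ v ∧
      ENNReal.ofReal (v ^ (ε / 2 - 1)) ≤ π {x | v < F x} := by
    intro M
    by_contra hcon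
    push_neg at hcon
    set M' : ℝ := max M 1 with hM'
    have hM'1 : (1:ℝ) ≤ M' := le_max_right _ _
    have hM'0 : (0:ℝ) < M' := lt_of_lt_of_le one_pos hM'1
    have tail : ∀ t : ℝ, M' < t → π {x | t < F x} ≤ ENNReal.ofReal (t ^ (ε / 2 - 1)) := by
      intro t ht
      exact (hcon t (lt_of_le_of_lt (le_max_left _ _) ht)
        (le_of_lt (lt_of_le_of_lt hM'1 ht))).le
    have lc := lintegral_rpow_eq_lintegral_meas_lt_mul π
      (f := F) (Eventually.of_forall fun x => le_trans zero_le_one (hF1 x))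
      hFmeas.aemeasurable hp0
    -- split the integral
    have hsplit : Set.Ioi (0:ℝ) = Set.Ioc 0 M' ∪ Set.Ioi M' := by
      rw [Set.Ioc_union_Ioi_eq_Ioi hM'0.le]
    have hmeasint : Measurable fun t : ℝ => π {x | t < F x} := by
      have : ∀ t : ℝ, π {x | t < F x} = π {x | t < F x} := fun _ => rfl
      exact Antitone.measurable (fun a b hab => measure_mono (fun x hx => lt_of_le_of_lt hab hx))
    have fin1 : ∫⁻ t in Set.Ioc 0 M', π {x | t < F x} * ENNReal.ofReal (t ^ (p - 1)) ∂volume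
        < ⊤ := by
      calc ∫⁻ t in Set.Ioc 0 M', π {x | t < F x} * ENNReal.ofReal (t ^ (p - 1)) ∂volume
          ≤ ∫⁻ t in Set.Ioc 0 M', ENNReal.ofReal (t ^ (p - 1)) ∂volume := by
            apply setLIntegral_mono' measurableSet_Ioc
            intro t _
            calc π {x | t < F x} * ENNReal.ofReal (t ^ (p - 1))
                ≤ 1 * ENNReal.ofReal (t ^ (p - 1)) :=
                  mul_le_mul_left prob_le_one _
              _ = ENNReal.ofReal (t ^ (p - 1)) := one_mul _
        _ < ⊤ := by
            have hii : IntervalIntegrable (fun t : ℝ => t ^ (p - 1)) volume 0 M' :=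
              intervalIntegral.intervalIntegrable_rpow' (by linarith)
            exact hii.1.setLIntegral_lt_top
    have fin2 : ∫⁻ t in Set.Ioi M', π {x | t < F x} * ENNReal.ofReal (t ^ (p - 1)) ∂volume
        < ⊤ := by
      calc ∫⁻ t in Set.Ioi M', π {x | t < F x} * ENNReal.ofReal (t ^ (p - 1)) ∂volume
          ≤ ∫⁻ t in Set.Ioi M', ENNReal.ofReal (t ^ (-ε/2 - 1)) ∂volume := by
            apply setLIntegral_mono' measurableSet_Ioi
            intro t ht
            have ht0 : (0:ℝ) < t := lt_trans hM'0 ht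
            calc π {x | t < F x} * ENNReal.ofReal (t ^ (p - 1))
                ≤ ENNReal.ofReal (t ^ (ε/2 - 1)) * ENNReal.ofReal (t ^ (p - 1)) :=
                  mul_le_mul_left (tail t ht) _
              _ = ENNReal.ofReal (t ^ (ε/2 - 1) * t ^ (p - 1)) :=
                  (ENNReal.ofReal_mul (Real.rpow_nonneg ht0.le _)).symm
              _ = ENNReal.ofReal (t ^ (-ε/2 - 1)) := by
                  rw [← Real.rpow_add ht0, hp]
                  ring_nf
        _ < ⊤ := by
            have : IntegrableOn (fun t : ℝ => t ^ (-ε/2 - 1)) (Set.Ioi M') volume :=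
              integrableOn_Ioi_rpow_of_lt (by linarith) hM'0
            exact this.setLIntegral_lt_top
    have fin : ∫⁻ t in Set.Ioi (0:ℝ), π {x | t < F x} * ENNReal.ofReal (t ^ (p - 1)) ∂volume
        < ⊤ := by
      rw [hsplit, lintegral_union measurableSet_Ioi (Set.Ioc_disjoint_Ioi le_rfl)]
      exact ENNReal.add_lt_top.mpr ⟨fin1, fin2⟩
    rw [hinf] at lc
    have : (⊤ : ENNReal) < ⊤ := by
      calc (⊤ : ENNReal) = ENNReal.ofReal p *
            ∫⁻ t in Set.Ioi (0:ℝ), π {x | t < F x} * ENNReal.ofReal (t ^ (p - 1)) ∂volume := lc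
        _ < ⊤ := ENNReal.mul_lt_top ENNReal.ofReal_lt_top fin
    exact lt_irrefl _ this
  choose f hf1 hf2 hf3 using key
  set w : ℕ → ℝ := fun n => Nat.rec (f 1) (fun n wn => f (max wn (n + 1))) n with hw
  have hwsucc : ∀ n, w (n + 1) = f (max (w n) (n + 1)) := fun n => rfl
  have hstep : ∀ n, max (w n) ((n:ℝ) + 1) < w (n + 1) := by
    intro n; rw [hwsucc]; exact hf1 _
  have hmono : StrictMono w :=
    strictMono_nat_of_lt_succ fun n => lt_of_le_of_lt (le_max_left _ _) (hstep n)
  have hnle : ∀ n : ℕ, (n : ℝ) ≤ w n := by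
    intro n
    cases n with
    | zero => exact le_trans (by norm_num) (hf2 1)
    | succ n =>
        push_cast
        exact le_of_lt (lt_of_le_of_lt (le_max_right _ _) (hstep n))
  refine ⟨w, hmono, ?_, ?_⟩
  · exact tendsto_atTop_mono hnle tendsto_natCast_atTop_atTop
  · intro n
    cases n with
    | zero => exact ⟨hf2 1, hf3 1⟩
    | succ n => exact ⟨hf2 _, hf3 _⟩
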